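/- Let (P, w) be a decision list of length n over α, and suppose there are indices j < k such that for every x : α, P k x implies P j x (rule k is subsumed by the earlier rule j). Let the reduced decision list be obtained by deleting rule k (keeping the remaining rules in their original order with their original values). Then for every x : α, the original list is total at x if and only if the reduced list is total at x, and whenever total their values at x are equal. -/
import Mathlib


/-- Soundness of the subsumption-based between-clause reduction (the `reduceList` step
of SCoTE).  Let `(P, w)` be a decision list of length `n + 1` over `α` with indices
`j < k` such that for every `x`, `P k x → P j x` (rule `k` is subsumed by the earlier
rule `j`).  Let the reduced decision list be obtained by deleting rule `k`: its `i`-th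
rule is rule `k.succAbove i` of the original list (the remaining rules in their
original order with their original values).  Then for every `x`, the original list is
total at `x` iff the reduced list is total at `x`, and whenever total their values at
`x` (the value of the first satisfied rule) are equal. -/
theorem delete_subsumed_rule_sound
    {α : Type*} {n : ℕ}
    (P : Fin (n + 1) → α → Prop) (w : Fin (n + 1) → ℝ)
    (j k : Fin (n + 1)) (hjk : j < k)
    (hsub : ∀ x : α, P k x → P j x) :
    ∀ x : α,
      ((∃ i, P i x) ↔ ∃ i : Fin n, P (k.succAbove i) x) ∧
      ∀ (i : Fin (n + 1)) (i' : Fin n),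
        (P i x ∧ ∀ l < i, ¬ P l x) →
        (P (k.succAbove i') x ∧ ∀ l < i', ¬ P (k.succAbove l) x) →
        w i = w (k.succAbove i') := by
  intro x
  constructor
  · constructor
    · rintro ⟨i, hi⟩
      by_cases hik : i = k
      · obtain ⟨m, hm⟩ := Fin.exists_succAbove_eq hjk.ne
        exact ⟨m, by rw [hm]; exact hsub x (hik ▸ hi)⟩
      · obtain ⟨m, hm⟩ := Fin.exists_succAbove_eq hik
        exact ⟨m, hm ▸ hi⟩
    · rintro ⟨i, hi⟩; exact ⟨_, hi⟩
  · rintro i i' ⟨hPi, hmin⟩ ⟨hPi', hmin'⟩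
    have hik : i ≠ k := by
      rintro rfl
      exact hmin j hjk (hsub x hPi)
    obtain ⟨m, hm⟩ := Fin.exists_succAbove_eq hik
    have h1 : ¬ m < i' := fun h => hmin' m h (hm ▸ hPi)
    have h2 : ¬ i' < m := fun h =>
      hmin (k.succAbove i') (hm ▸ Fin.strictMono_succAbove k h) hPi'
    have hmi : m = i' := le_antisymm (not_lt.1 h2) (not_lt.1 h1)
    rw [← hm, hmi]
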